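/- arXiv:1111.1585 — 2 statements merged into one kernel-verified Lean document; each statement's English description precedes it below -/
import Mathlib

section
/- Let (X,G) be a faithful transformation monoid where G is a group. Then the transformation monoid (X, G ∪ X̄), obtained by adjoining to G all constant maps x̄: X → X (y ↦ x), strongly divides the wreath product (X, U_X) ≀ (G,G), where U_X = X̄ ∪ {1} is the monoid of constant maps on X together with the identity. The covering is given by φ(x,g) = x·g. -/
/-- A transformation monoid `(X, M)`: a monoid `M` together with a right
action of `M` on the set `X` (the action is not required to be faithful). -/
structure TM where
  /-- the state set -/
  X : Type
  /-- the monoid -/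
  M : Type
  [str : Monoid M]
  /-- the right action of `M` on `X` -/
  act : X → M → X
  act_one : ∀ x, act x 1 = x
  act_mul : ∀ x m n, act x (m * n) = act (act x m) n

attribute [instance] TM.str

/-- A transformation monoid is faithful if distinct monoid elements act as
distinct transformations. -/
def TM.Faithful (T : TM) : Prop :=
  ∀ m m' : T.M, (∀ x, T.act x m = T.act x m') → m = m'

/-- The wreath product `(X,M) ≀ (Y,N)`: the monoid `M^Y ⋊ N` (with
multiplication `(f,n)(g,k) = (f + (n*g), nk)`, where `(f + (n*g))(y) =
f(y)·g(y·n)`) acting on `X × Y` by `(x,y)·(f,n) = (x·(yf), y·n)`. -/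
def TM.wr (S T : TM) : TM where
  X := S.X × T.X
  M := (T.X → S.M) × T.M
  str :=
    { mul := fun p q => (fun y => p.1 y * q.1 (T.act y p.2), p.2 * q.2)
      one := (fun _ => 1, 1)
      npow := fun n x => @npowRec _ ⟨(fun _ => 1, 1)⟩
        ⟨fun p q => (fun y => p.1 y * q.1 (T.act y p.2), p.2 * q.2)⟩ n x
      npow_zero := fun _ => rfl
      npow_succ := fun _ _ => rfl
      mul_assoc := by
        intro a b c
        refine Prod.ext ?_ (mul_assoc _ _ _)
        funext y
        show (a.1 y * b.1 (T.act y a.2)) * c.1 (T.act y (a.2 * b.2))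
            = a.1 y * (b.1 (T.act y a.2) * c.1 (T.act (T.act y a.2) b.2))
        rw [T.act_mul, mul_assoc]
      one_mul := by
        intro a
        refine Prod.ext ?_ (one_mul _)
        funext y
        show 1 * a.1 (T.act y 1) = a.1 y
        rw [T.act_one, one_mul]
      mul_one := by
        intro a
        refine Prod.ext ?_ (mul_one _)
        funext y
        show a.1 y * 1 = a.1 y
        exact mul_one _ }
  act := fun xy fn => (S.act xy.1 (fn.1 xy.2), T.act xy.2 fn.2)
  act_one := by
    intro x
    refine Prod.ext (S.act_one _) (T.act_one _)
  act_mul := by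
    intro x m n
    refine Prod.ext ?_ (T.act_mul _ _ _)
    exact (S.act_mul _ _ _).trans rfl

/-- `(X,M)` strongly divides `(Y,N)` via the surjection `φ : Y → X`:
there are a submonoid `N' ⊆ N` and a surjective homomorphism `ψ : N' → M`
with `φ(y·n) = φ(y)·ψ(n)`. -/
def TM.SDivVia (S T : TM) (φ : T.X → S.X) : Prop :=
  Function.Surjective φ ∧
  ∃ (N' : Submonoid T.M) (ψ : N' →* S.M),
    Function.Surjective ψ ∧
    ∀ (y : T.X) (n : N'), φ (T.act y (n : T.M)) = S.act (φ y) (ψ n)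

/-- Strong division of transformation monoids. -/
def TM.SDiv (S T : TM) : Prop :=
  ∃ φ : T.X → S.X, TM.SDivVia S T φ

/-- The full transformation monoid `T(X)` on `X`, with multiplication
`(fg)(x) = g(f(x))` matching the right-action convention. -/
def TMon (X : Type) : Type := X → X

instance (X : Type) : Monoid (TMon X) where
  mul f g := fun x => g (f x)
  one := fun x => x
  mul_assoc := fun _ _ _ => rfl
  one_mul := fun _ => rfl
  mul_one := fun _ => rfl

/-- The faithful transformation monoid on `X` given by a submonoid of
`T(X)`. -/
def subTM (X : Type) (N : Submonoid (TMon X)) : TM where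
  X := X
  M := N
  act := fun x f => (f : TMon X) x
  act_one := fun _ => rfl
  act_mul := fun _ _ _ => rfl

/-- The submonoid `U_X = X̄ ∪ {1}` of `T(X)`: the identity together with all
constant maps `x̄ : y ↦ x`. -/
def UXsub (X : Type) : Submonoid (TMon X) where
  carrier := {f : TMon X | f = 1 ∨ ∃ p : X, f = fun _ => p}
  one_mem' := Or.inl rfl
  mul_mem' := by
    rintro f g (rfl | ⟨p, rfl⟩) hg
    · rcases hg with rfl | ⟨q, rfl⟩
      · exact Or.inl rfl
      · exact Or.inr ⟨q, rfl⟩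
    · rcases hg with rfl | ⟨q, rfl⟩
      · exact Or.inr ⟨p, rfl⟩
      · exact Or.inr ⟨q, rfl⟩

/-- The transformation monoid of a monoid acting on itself by right
multiplication. -/
def regTM (G : Type) [Monoid G] : TM where
  X := G
  M := G
  act := fun x g => x * g
  act_one := mul_one
  act_mul := fun x m n => (mul_assoc x m n).symm

/-- The submonoid `G ∪ X̄` of `T(X)` obtained by adjoining to `G ⊆ T(X)` all
constant maps on `X`. -/
def withConstsSub (X : Type) (G : Submonoid (TMon X)) : Submonoid (TMon X) where
  carrier := {f : TMon X | f ∈ G ∨ ∃ p : X, f = fun _ => p}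
  one_mem' := Or.inl G.one_mem
  mul_mem' := by
    rintro f g (hf | ⟨p, rfl⟩) hg
    · rcases hg with hg | ⟨q, rfl⟩
      · exact Or.inl (G.mul_mem hf hg)
      · exact Or.inr ⟨q, rfl⟩
    · rcases hg with hg | ⟨q, rfl⟩
      · exact Or.inr ⟨(g : TMon X) p, rfl⟩
      · exact Or.inr ⟨q, rfl⟩

namespace ConstsAdjoin

variable {X : Type} {G : Submonoid (TMon X)}

/-- The wreath-product monoid in question. -/
abbrev WM (X : Type) (G : Submonoid (TMon X)) : Type :=
  ((subTM X (UXsub X)).wr (regTM G)).M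

/-- The second component of a wreath element, as an element of `G`. -/
def n2 (p : WM X G) : G := p.2

/-- The first component of a wreath element, evaluated at `g`. -/
def f1 (p : WM X G) (g : G) : UXsub X := p.1 g

/-- The transformation on `X` induced by a wreath element. -/
def Phi (p : WM X G) : TMon X := fun y => (n2 p).val ((f1 p 1).val y)

/-- Compatibility condition for a wreath element. -/
def Cond (p : WM X G) : Prop :=
  ∀ (g : G) (x : X),
    (n2 p).val (g.val ((f1 p g).val x)) = Phi p (g.val x)

theorem phi_mul (p q : WM X G) (hp : Cond p) (hq : Cond q) :
    Phi (p * q) = Phi p * Phi q := by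
  funext y
  show (n2 q).val ((n2 p).val ((f1 q (1 * n2 p)).val ((f1 p 1).val y)))
      = Phi q (Phi p y)
  rw [one_mul]
  have h2 : (n2 q).val ((n2 p).val ((f1 q (n2 p)).val ((f1 p 1).val y)))
      = Phi q ((n2 p).val ((f1 p 1).val y)) := hq (n2 p) ((f1 p 1).val y)
  rw [h2]
  have h1 : (n2 p).val ((f1 p 1).val y) = Phi p y := hp 1 y
  rw [h1]

theorem cond_mul (p q : WM X G) (hp : Cond p) (hq : Cond q) : Cond (p * q) := by
  intro g x
  show (n2 q).val ((n2 p).val (g.val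
      ((f1 q (g * n2 p)).val ((f1 p g).val x))))
      = Phi (p * q) (g.val x)
  have h2 : (n2 q).val ((n2 p).val (g.val
      ((f1 q (g * n2 p)).val ((f1 p g).val x))))
      = Phi q ((n2 p).val (g.val ((f1 p g).val x))) :=
    hq (g * n2 p) ((f1 p g).val x)
  rw [h2, hp g x, phi_mul p q hp hq]
  rfl

theorem cond_one : Cond (1 : WM X G) := fun _ _ => rfl

end ConstsAdjoin

/-- Let `(X,G)` be a faithful transformation monoid where
`G` is a group (realized as a submonoid of `T(X)` all of whose elements are
invertible). Then `(X, G ∪ X̄)`, obtained by adjoining all constant maps,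
strongly divides the wreath product `(X, U_X) ≀ (G,G)`, with the covering
given by `φ(x,g) = x·g`. -/
theorem consts_adjoined_sdiv_wreath (X : Type) (G : Submonoid (TMon X))
    (hG : ∀ g : G, IsUnit g) :
    TM.SDivVia (subTM X (withConstsSub X G)) ((subTM X (UXsub X)).wr (regTM G))
      (fun (p : X × G) => p.2.1 p.1) := by
  open ConstsAdjoin in
  refine ⟨fun x => ⟨(x, (1 : G)), rfl⟩, ?_⟩
  have key : ∀ (g : G) (c : X), g.val (((hG g).unit⁻¹.val : G).val c) = c := by
    intro g c
    have e : ((hG g).unit⁻¹.val * g : G) = 1 := (hG g).val_inv_mul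
    exact congrFun (congrArg Subtype.val e) c
  refine ⟨{ carrier := {p : WM X G | Phi p ∈ withConstsSub X G ∧ Cond p},
            one_mem' := ⟨Or.inl G.one_mem, cond_one⟩,
            mul_mem' := fun {a b} ha hb =>
              ⟨by rw [phi_mul a b ha.2 hb.2]; exact mul_mem ha.1 hb.1,
               cond_mul a b ha.2 hb.2⟩ },
         { toFun := fun n => ⟨Phi n.val, n.2.1⟩,
           map_one' := rfl,
           map_mul' := fun a b => Subtype.ext (phi_mul a.val b.val a.2.2 b.2.2) },
         ?_, ?_⟩
  · rintro ⟨h, hh | ⟨c, rfl⟩⟩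
    · exact ⟨⟨(fun _ => 1, ⟨h, hh⟩), Or.inl hh, fun g x => rfl⟩, rfl⟩
    · refine ⟨⟨(fun g => ⟨fun _ => ((hG g).unit⁻¹.val : G).val c, Or.inr ⟨_, rfl⟩⟩, (1 : G)),
              Or.inr ⟨c, funext fun y => key 1 c⟩,
              fun g x => (key g c).trans (key 1 c).symm⟩, ?_⟩
      exact Subtype.ext (funext fun y => key 1 c)
  · rintro ⟨x, g⟩ ⟨n, hn⟩
    exact hn.2 g x
end

section
/- The transformation monoid ({a₀,…,a_n}, U_{n+1}) strongly divides the direct product ({a₀,…,a_{n-1}}, U_n) × ({a₀,a_n}, U_2), where U_k denotes the monoid of all constant maps on the k-element state set together with the identity. The covering surjection is φ(a_k, a_ℓ) = a_{max(k,ℓ)}. -/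
/-- The direct product of transformation monoids, with coordinatewise
action. -/
def TM.prod (S T : TM) : TM where
  X := S.X × T.X
  M := S.M × T.M
  act := fun p q => (S.act p.1 q.1, T.act p.2 q.2)
  act_one := fun p => Prod.ext (S.act_one _) (T.act_one _)
  act_mul := fun p m n => Prod.ext (S.act_mul _ _ _) (T.act_mul _ _ _)


namespace StrongDiv17

/-- The covering map. -/
def phi (n : ℕ) (p : Fin n × Fin 2) : Fin (n+1) :=
  if p.2 = 1 then Fin.last n else Fin.castSucc p.1

/-- A section: first component. -/
lemma phi_zero (n : ℕ) (k : Fin n) : phi n (k, 0) = Fin.castSucc k := by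
  have h : ¬((k, (0 : Fin 2)).2 = 1) :=
    fun hc => (by decide : ((0 : Fin 2) = 1) → False) hc
  exact if_neg h

lemma phi_one (n : ℕ) (k : Fin n) : phi n (k, 1) = Fin.last n := if_pos rfl

def pre (n : ℕ) (hn : 1 ≤ n) (x : Fin (n+1)) : Fin n :=
  if h : (x : ℕ) < n then ⟨x, h⟩ else ⟨0, hn⟩

/-- A section: second component. -/
def post (n : ℕ) (x : Fin (n+1)) : Fin 2 :=
  if (x : ℕ) < n then 0 else 1

lemma phi_pre_post (n : ℕ) (hn : 1 ≤ n) (x : Fin (n+1)) :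
    phi n (pre n hn x, post n x) = x := by
  unfold phi pre post
  by_cases h : (x : ℕ) < n
  · simp only [h, if_true, dif_pos h]
    rw [if_neg (by decide)]
    exact Fin.ext rfl
  · simp only [h, if_false, dif_neg h]
    rw [if_pos trivial]
    have hx : (x : ℕ) = n := le_antisymm (Nat.lt_succ_iff.mp x.isLt) (le_of_not_gt h)
    exact Fin.ext hx.symm

/-- The submonoid `N'` of the product: pairs whose joint action descends
through `phi` to an element of `U_{n+1}`. -/
def Nsub (n : ℕ) : Submonoid (↥(UXsub (Fin n)) × ↥(UXsub (Fin 2))) where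
  carrier := {a | ∃ h : TMon (Fin (n+1)), h ∈ UXsub (Fin (n+1)) ∧
    ∀ (k : Fin n) (l : Fin 2),
      phi n ((a.1 : TMon (Fin n)) k, (a.2 : TMon (Fin 2)) l) = h (phi n (k, l))}
  one_mem' := ⟨1, (UXsub _).one_mem, fun _ _ => rfl⟩
  mul_mem' := by
    rintro a b ⟨h1, hm1, hc1⟩ ⟨h2, hm2, hc2⟩
    refine ⟨h1 * h2, (UXsub _).mul_mem hm1 hm2, fun k l => ?_⟩
    show phi n ((b.1 : TMon (Fin n)) ((a.1 : TMon (Fin n)) k),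
        (b.2 : TMon (Fin 2)) ((a.2 : TMon (Fin 2)) l)) = h2 (h1 (phi n (k, l)))
    rw [← hc1]
    exact hc2 _ _

/-- The underlying map of the homomorphism `ψ`. -/
def Psi (n : ℕ) (hn : 1 ≤ n) (a : ↥(UXsub (Fin n)) × ↥(UXsub (Fin 2))) :
    TMon (Fin (n+1)) :=
  fun x => phi n ((a.1 : TMon (Fin n)) (pre n hn x), (a.2 : TMon (Fin 2)) (post n x))

lemma Psi_eq (n : ℕ) (hn : 1 ≤ n) (a : ↥(UXsub (Fin n)) × ↥(UXsub (Fin 2)))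
    (h : TMon (Fin (n+1)))
    (hc : ∀ (k : Fin n) (l : Fin 2),
      phi n ((a.1 : TMon (Fin n)) k, (a.2 : TMon (Fin 2)) l) = h (phi n (k, l))) :
    Psi n hn a = h :=
  funext fun x => by
    show phi n ((a.1 : TMon (Fin n)) (pre n hn x), (a.2 : TMon (Fin 2)) (post n x)) = h x
    rw [hc, phi_pre_post]

lemma Psi_compat (n : ℕ) (hn : 1 ≤ n) (a : ↥(UXsub (Fin n)) × ↥(UXsub (Fin 2)))
    (ha : a ∈ Nsub n) (k : Fin n) (l : Fin 2) :
    phi n ((a.1 : TMon (Fin n)) k, (a.2 : TMon (Fin 2)) l) = Psi n hn a (phi n (k, l)) := by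
  obtain ⟨h, _, hc⟩ := ha
  rw [Psi_eq n hn a h hc]
  exact hc k l

lemma Psi_mem (n : ℕ) (hn : 1 ≤ n) (a : ↥(UXsub (Fin n)) × ↥(UXsub (Fin 2)))
    (ha : a ∈ Nsub n) : Psi n hn a ∈ UXsub (Fin (n+1)) := by
  obtain ⟨h, hm, hc⟩ := ha
  rw [Psi_eq n hn a h hc]
  exact hm

/-- The covering homomorphism `ψ : N' →* U_{n+1}`. -/
def psi (n : ℕ) (hn : 1 ≤ n) : Nsub n →* ↥(UXsub (Fin (n+1))) where
  toFun a := ⟨Psi n hn a.1, Psi_mem n hn a.1 a.2⟩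
  map_one' := Subtype.ext (funext fun x => phi_pre_post n hn x)
  map_mul' a b := by
    refine Subtype.ext (funext fun x => ?_)
    have := Psi_compat n hn b.1 b.2 ((a.1.1 : TMon (Fin n)) (pre n hn x))
      ((a.1.2 : TMon (Fin 2)) (post n x))
    exact this

end StrongDiv17

/-- The transformation monoid `({a₀,…,aₙ}, U_{n+1})`
strongly divides the direct product
`({a₀,…,a_{n-1}}, U_n) × ({a₀,a_n}, U_2)`, with the covering surjection
`φ(a_k, a_ℓ) = a_{max(k,ℓ)}`. Here the state sets are modelled by
`Fin (n+1)`, `Fin n` and `Fin 2` (the two-element state set `{a₀,a_n}` with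
`0 ↦ a₀`, `1 ↦ aₙ`), and `U_Y = Ȳ ∪ {1}` is the monoid of all constant maps
together with the identity. -/
theorem U_np1_sdiv_prod (n : ℕ) (hn : 1 ≤ n) :
    TM.SDivVia (subTM (Fin (n + 1)) (UXsub (Fin (n + 1))))
      ((subTM (Fin n) (UXsub (Fin n))).prod (subTM (Fin 2) (UXsub (Fin 2))))
      (fun (p : Fin n × Fin 2) => if p.2 = 1 then Fin.last n else Fin.castSucc p.1) := by
  classical
  open StrongDiv17 in
  refine ⟨fun x => ⟨(pre n hn x, post n x), phi_pre_post n hn x⟩,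
    Nsub n, psi n hn, ?_, ?_⟩
  · -- surjectivity of ψ
    rintro ⟨h', hm'⟩
    rcases hm' with h1 | ⟨p, hp⟩
    · refine ⟨⟨1, (Nsub n).one_mem⟩, ?_⟩
      exact Subtype.ext (funext fun x => (phi_pre_post n hn x).trans (congrFun h1 x).symm)
    · by_cases hpn : (p : ℕ) < n
      · refine ⟨⟨((⟨fun _ => (⟨p, hpn⟩ : Fin n), Or.inr ⟨_, rfl⟩⟩ : ↥(UXsub (Fin n))),
          (⟨fun _ => (0 : Fin 2), Or.inr ⟨_, rfl⟩⟩ : ↥(UXsub (Fin 2)))),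
          ⟨fun _ => p, Or.inr ⟨p, rfl⟩, fun k l => ?_⟩⟩, ?_⟩
        · show phi n (⟨p, hpn⟩, 0) = p
          rw [phi_zero]
          exact Fin.ext rfl
        · refine Subtype.ext (funext fun x => ?_)
          show phi n (⟨p, hpn⟩, 0) = h' x
          rw [phi_zero, hp]
          exact Fin.ext rfl
      · have hpl : p = Fin.last n :=
          Fin.ext (le_antisymm (Nat.lt_succ_iff.mp p.isLt) (le_of_not_gt hpn))
        refine ⟨⟨((1 : ↥(UXsub (Fin n))),
          (⟨fun _ => (1 : Fin 2), Or.inr ⟨_, rfl⟩⟩ : ↥(UXsub (Fin 2)))),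
          ⟨fun _ => p, Or.inr ⟨p, rfl⟩, fun k l => ?_⟩⟩, ?_⟩
        · show phi n (k, 1) = p
          rw [phi_one, hpl]
        · refine Subtype.ext (funext fun x => ?_)
          show phi n (pre n hn x, 1) = h' x
          rw [phi_one, hp, hpl]
  · -- compatibility
    rintro y m
    exact Psi_compat n hn m.1 m.2 y.1 y.2
end
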